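/- Let u₁ ~ N(0, σ₁²) and u₂ ~ N(0, σ₂²) be independent with σ₁ ≥ σ₂ > 0. Then R = √(u₁² + u₂²) has density f_R(r) = ((1+q²)/(q Ω)) r exp(−((1+q²)²/(4 q² Ω)) r²) I₀(((1−q⁴)/(4 q² Ω)) r²) for r > 0, where q = σ₂/σ₁, Ω = σ₁² + σ₂², and I₀ is the modified Bessel function of the first kind of order zero. -/

import Mathlib

open Real MeasureTheory ProbabilityTheory Set
open scoped ENNReal NNReal

/-- The modified Bessel function of the first kind of order zero,
`I₀(x) = (1/π) ∫₀^π e^{x cos φ} dφ`. -/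
noncomputable def besselI0 (x : ℝ) : ℝ :=
  (1 / π) * ∫ φ in (0:ℝ)..π, Real.exp (x * Real.cos φ)


lemma lintegral_comp_polarCoord_symm' (f : ℝ × ℝ → ℝ≥0∞) :
    (∫⁻ p in polarCoord.target, ENNReal.ofReal p.1 * f (polarCoord.symm p)) = ∫⁻ p, f p := by
  set B : ℝ × ℝ → ℝ × ℝ →L[ℝ] ℝ × ℝ := fun p =>
    LinearMap.toContinuousLinearMap (Matrix.toLin (Module.Basis.finTwoProd ℝ) (Module.Basis.finTwoProd ℝ)
      !![cos p.2, -p.1 * sin p.2; sin p.2, p.1 * cos p.2])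
  have A : ∀ p ∈ polarCoord.target, HasFDerivWithinAt polarCoord.symm (B p) polarCoord.target p :=
    fun p _ => (hasFDerivAt_polarCoord_symm p).hasFDerivWithinAt
  have B_det : ∀ p, (B p).det = p.1 := by
    intro p
    conv_rhs => rw [← one_mul p.1, ← cos_sq_add_sin_sq p.2]
    simp only [B, neg_mul, LinearMap.det_toContinuousLinearMap, LinearMap.det_toLin,
      Matrix.det_fin_two_of, sub_neg_eq_add]
    ring
  symm
  calc
    ∫⁻ p, f p = ∫⁻ p in polarCoord.source, f p := by
      rw [← setLIntegral_univ]
      exact setLIntegral_congr polarCoord_source_ae_eq_univ.symm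
    _ = ∫⁻ p in polarCoord.symm '' polarCoord.target, f p := by
      rw [polarCoord.symm_image_target_eq_source]
    _ = ∫⁻ p in polarCoord.target, ENNReal.ofReal |(B p).det| * f (polarCoord.symm p) := by
      exact lintegral_image_eq_lintegral_abs_det_fderiv_mul volume
        polarCoord.open_target.measurableSet A polarCoord.symm.injOn f
    _ = ∫⁻ p in polarCoord.target, ENNReal.ofReal p.1 * f (polarCoord.symm p) := by
      apply setLIntegral_congr_fun polarCoord.open_target.measurableSet
      intro x hx
      dsimp only
      rw [B_det, abs_of_pos hx.1]


lemma withDensity_prod_withDensity {f g : ℝ → ℝ≥0∞} (hf : Measurable f) (hg : Measurable g)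
    [SigmaFinite (volume.withDensity f)] [SigmaFinite (volume.withDensity g)] :
    (volume.withDensity f).prod (volume.withDensity g)
      = (volume : Measure (ℝ × ℝ)).withDensity (fun p => f p.1 * g p.2) := by
  refine Measure.prod_eq fun s t hs ht => ?_
  rw [withDensity_apply _ (hs.prod ht), Measure.volume_eq_prod,
    ← Measure.prod_restrict, lintegral_prod_mul hf.aemeasurable hg.aemeasurable,
    withDensity_apply _ hs, withDensity_apply _ ht]


lemma integral_exp_cos_two (b : ℝ) :
    ∫ θ in (-π)..π, Real.exp (b * Real.cos (2 * θ)) = 2 * π * besselI0 b := by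
  have hcont : Continuous fun u => Real.exp (b * Real.cos u) :=
    Real.continuous_exp.comp (continuous_const.mul Real.continuous_cos)
  have hper : Function.Periodic (fun u => Real.exp (b * Real.cos u)) (2 * π) := fun x => by
    simp [Real.cos_add_two_pi]
  have h2 : ∫ θ in (-π)..π, Real.exp (b * Real.cos (2 * θ))
      = (2:ℝ)⁻¹ * ∫ u in (2*(-π))..(2*π), Real.exp (b * Real.cos u) := by
    rw [intervalIntegral.integral_comp_mul_left (fun u => Real.exp (b * Real.cos u))
      (two_ne_zero)]
    simp [smul_eq_mul]
  have hsplit : ∫ u in (2*(-π))..(2*π), Real.exp (b * Real.cos u)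
      = (∫ u in (2*(-π))..(0:ℝ), Real.exp (b * Real.cos u))
        + ∫ u in (0:ℝ)..(2*π), Real.exp (b * Real.cos u) :=
    (intervalIntegral.integral_add_adjacent_intervals
      (hcont.intervalIntegrable _ _) (hcont.intervalIntegrable _ _)).symm
  have hneg : ∫ u in (2*(-π))..(0:ℝ), Real.exp (b * Real.cos u)
      = ∫ u in (0:ℝ)..(2*π), Real.exp (b * Real.cos u) := by
    have := hper.intervalIntegral_add_eq (2*(-π)) 0
    simpa [two_mul, add_assoc] using this
  have hsplit2 : ∫ u in (0:ℝ)..(2*π), Real.exp (b * Real.cos u)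
      = (∫ u in (0:ℝ)..π, Real.exp (b * Real.cos u))
        + ∫ u in π..(2*π), Real.exp (b * Real.cos u) :=
    (intervalIntegral.integral_add_adjacent_intervals
      (hcont.intervalIntegrable _ _) (hcont.intervalIntegrable _ _)).symm
  have hrefl : ∫ u in π..(2*π), Real.exp (b * Real.cos u)
      = ∫ u in (0:ℝ)..π, Real.exp (b * Real.cos u) := by
    have := intervalIntegral.integral_comp_sub_left
      (fun u => Real.exp (b * Real.cos u)) (2*π) (a := 0) (b := π)
    rw [show (2*π - π) = π by ring, show (2*π - 0) = 2*π by ring] at this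
    rw [← this]
    apply intervalIntegral.integral_congr
    intro x _
    simp only [Real.cos_two_pi_sub]
  have hπ : (π:ℝ) ≠ 0 := Real.pi_ne_zero
  rw [h2, hsplit, hneg, hsplit2, hrefl, besselI0]
  field_simp
  ring


lemma lintegral_Ioo_exp_cos (b : ℝ) :
    ∫⁻ θ in Ioo (-π) π, ENNReal.ofReal (Real.exp (b * Real.cos (2 * θ)))
      = ENNReal.ofReal (2 * π * besselI0 b) := by
  have hcont : Continuous fun θ : ℝ => Real.exp (b * Real.cos (2 * θ)) :=
    Real.continuous_exp.comp (continuous_const.mul (Real.continuous_cos.comp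
      (continuous_const.mul continuous_id)))
  have hint : IntegrableOn (fun θ : ℝ => Real.exp (b * Real.cos (2 * θ))) (Ioo (-π) π) :=
    (hcont.integrableOn_Icc).mono_set Ioo_subset_Icc_self
  rw [← ofReal_integral_eq_lintegral_ofReal hint (ae_of_all _ fun θ => (Real.exp_pos _).le),
    ← integral_Ioc_eq_integral_Ioo,
    ← intervalIntegral.integral_of_le (by linarith [Real.pi_pos] : -π ≤ π),
    integral_exp_cos_two]

lemma map_sqrt_gaussian (σ₁ σ₂ : ℝ) (h1 : 0 < σ₁) (h2 : 0 < σ₂) :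
    Measure.map (fun p : ℝ × ℝ => Real.sqrt (p.1 ^ 2 + p.2 ^ 2))
      ((gaussianReal 0 (σ₁ ^ 2).toNNReal).prod (gaussianReal 0 (σ₂ ^ 2).toNNReal))
    = volume.withDensity (fun r : ℝ => ENNReal.ofReal (if 0 < r then
        r / (σ₁ * σ₂) * Real.exp (-(1 / (4 * σ₁ ^ 2) + 1 / (4 * σ₂ ^ 2)) * r ^ 2)
          * besselI0 ((1 / (4 * σ₂ ^ 2) - 1 / (4 * σ₁ ^ 2)) * r ^ 2) else 0)) := by
  have hπ := Real.pi_pos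
  have hσ₁ : σ₁ ≠ 0 := h1.ne'
  have hσ₂ : σ₂ ≠ 0 := h2.ne'
  set v₁ : ℝ≥0 := (σ₁ ^ 2).toNNReal with hv₁def
  set v₂ : ℝ≥0 := (σ₂ ^ 2).toNNReal with hv₂def
  have hv₁ : v₁ ≠ 0 := by
    simp only [hv₁def, ne_eq, Real.toNNReal_eq_zero, not_le]; positivity
  have hv₂ : v₂ ≠ 0 := by
    simp only [hv₂def, ne_eq, Real.toNNReal_eq_zero, not_le]; positivity
  have hcv₁ : (v₁ : ℝ) = σ₁ ^ 2 := Real.coe_toNNReal _ (by positivity)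
  have hcv₂ : (v₂ : ℝ) = σ₂ ^ 2 := Real.coe_toNNReal _ (by positivity)
  set a : ℝ := 1 / (4 * σ₁ ^ 2) + 1 / (4 * σ₂ ^ 2) with ha_def
  set b₀ : ℝ := 1 / (4 * σ₂ ^ 2) - 1 / (4 * σ₁ ^ 2) with hb_def
  set K : ℝ := (2 * π * σ₁ * σ₂)⁻¹ with hK_def
  have hKpos : 0 < K := by rw [hK_def]; positivity
  set g : ℝ × ℝ → ℝ := fun p => Real.sqrt (p.1 ^ 2 + p.2 ^ 2) with hg_def
  have hg : Measurable g :=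
    (Real.continuous_sqrt.comp ((continuous_fst.pow 2).add (continuous_snd.pow 2))).measurable
  set φ : ℝ → ℝ≥0∞ := fun r => ENNReal.ofReal (if 0 < r then
      r / (σ₁ * σ₂) * Real.exp (-a * r ^ 2) * besselI0 (b₀ * r ^ 2) else 0) with hφ_def
  have hprod : (gaussianReal 0 v₁).prod (gaussianReal 0 v₂)
      = (volume : Measure (ℝ × ℝ)).withDensity
          (fun p => gaussianPDF 0 v₁ p.1 * gaussianPDF 0 v₂ p.2) := by
    haveI i1 : SigmaFinite (volume.withDensity (gaussianPDF 0 v₁)) := by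
      rw [← gaussianReal_of_var_ne_zero 0 hv₁]; infer_instance
    haveI i2 : SigmaFinite (volume.withDensity (gaussianPDF 0 v₂)) := by
      rw [← gaussianReal_of_var_ne_zero 0 hv₂]; infer_instance
    rw [gaussianReal_of_var_ne_zero 0 hv₁, gaussianReal_of_var_ne_zero 0 hv₂]
    exact withDensity_prod_withDensity (measurable_gaussianPDF 0 v₁) (measurable_gaussianPDF 0 v₂)
  ext s hs
  rw [Measure.map_apply hg hs, withDensity_apply _ hs, hprod, withDensity_apply _ (hg hs),
    ← lintegral_indicator (hg hs), ← lintegral_comp_polarCoord_symm']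
  have hpoint : ∀ p ∈ polarCoord.target,
      ENNReal.ofReal p.1 * (g ⁻¹' s).indicator
          (fun q => gaussianPDF 0 v₁ q.1 * gaussianPDF 0 v₂ q.2) (polarCoord.symm p)
        = s.indicator (fun _ => (1:ℝ≥0∞)) p.1
            * ENNReal.ofReal (p.1 * K * Real.exp (-a * p.1 ^ 2))
            * ENNReal.ofReal (Real.exp (b₀ * p.1 ^ 2 * Real.cos (2 * p.2))) := by
    rintro ⟨r, θ⟩ hp
    simp only [polarCoord_target, mem_prod, mem_Ioi, mem_Ioo] at hp
    obtain ⟨hr, hθ⟩ := hp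
    dsimp only
    have hsymm : polarCoord.symm (r, θ) = (r * Real.cos θ, r * Real.sin θ) := by
      simp [polarCoord]
    have hgval : g (polarCoord.symm (r, θ)) = r := by
      rw [hsymm]
      show Real.sqrt ((r * Real.cos θ) ^ 2 + (r * Real.sin θ) ^ 2) = r
      rw [show (r * Real.cos θ) ^ 2 + (r * Real.sin θ) ^ 2
          = r ^ 2 * (Real.sin θ ^ 2 + Real.cos θ ^ 2) by ring, Real.sin_sq_add_cos_sq, mul_one,
        Real.sqrt_sq hr.le]
    have hGval : gaussianPDF 0 v₁ (r * Real.cos θ) * gaussianPDF 0 v₂ (r * Real.sin θ)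
        = ENNReal.ofReal (K * Real.exp (-a * r ^ 2)
            * Real.exp (b₀ * r ^ 2 * Real.cos (2 * θ))) := by
      rw [gaussianPDF, gaussianPDF, ← ENNReal.ofReal_mul (gaussianPDFReal_nonneg _ _ _)]
      congr 1
      rw [gaussianPDFReal, gaussianPDFReal, hcv₁, hcv₂]
      have hs1 : Real.sqrt (2 * π * σ₁ ^ 2) = Real.sqrt (2 * π) * σ₁ := by
        rw [Real.sqrt_mul (by positivity), Real.sqrt_sq h1.le]
      have hs2 : Real.sqrt (2 * π * σ₂ ^ 2) = Real.sqrt (2 * π) * σ₂ := by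
        rw [Real.sqrt_mul (by positivity), Real.sqrt_sq h2.le]
      have hsq : Real.sqrt (2 * π) * Real.sqrt (2 * π) = 2 * π :=
        Real.mul_self_sqrt (by positivity)
      have hexp : Real.exp (-(r * Real.cos θ - 0) ^ 2 / (2 * σ₁ ^ 2))
            * Real.exp (-(r * Real.sin θ - 0) ^ 2 / (2 * σ₂ ^ 2))
          = Real.exp (-a * r ^ 2) * Real.exp (b₀ * r ^ 2 * Real.cos (2 * θ)) := by
        rw [← Real.exp_add, ← Real.exp_add]
        congr 1
        have hsin : Real.sin θ ^ 2 = 1 - Real.cos θ ^ 2 := by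
          have := Real.sin_sq_add_cos_sq θ; linarith
        rw [Real.cos_two_mul, sub_zero, sub_zero, mul_pow, mul_pow, hsin, ha_def, hb_def]
        field_simp
        ring
      calc (Real.sqrt (2 * π * σ₁ ^ 2))⁻¹ * Real.exp (-(r * Real.cos θ - 0) ^ 2 / (2 * σ₁ ^ 2))
            * ((Real.sqrt (2 * π * σ₂ ^ 2))⁻¹
              * Real.exp (-(r * Real.sin θ - 0) ^ 2 / (2 * σ₂ ^ 2)))
          = ((Real.sqrt (2 * π * σ₁ ^ 2)) * (Real.sqrt (2 * π * σ₂ ^ 2)))⁻¹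
            * (Real.exp (-(r * Real.cos θ - 0) ^ 2 / (2 * σ₁ ^ 2))
              * Real.exp (-(r * Real.sin θ - 0) ^ 2 / (2 * σ₂ ^ 2))) := by
            rw [mul_inv]; ring
        _ = K * (Real.exp (-a * r ^ 2) * Real.exp (b₀ * r ^ 2 * Real.cos (2 * θ))) := by
            rw [hexp, hs1, hs2, hK_def]
            congr 2
            rw [show Real.sqrt (2*π) * σ₁ * (Real.sqrt (2*π) * σ₂)
                = (Real.sqrt (2*π) * Real.sqrt (2*π)) * σ₁ * σ₂ by ring, hsq]
        _ = K * Real.exp (-a * r ^ 2) * Real.exp (b₀ * r ^ 2 * Real.cos (2 * θ)) := by ring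
    by_cases hrs : r ∈ s
    · have hmem : polarCoord.symm (r, θ) ∈ g ⁻¹' s := by rw [mem_preimage, hgval]; exact hrs
      rw [indicator_of_mem hmem, indicator_of_mem hrs, hsymm, hGval, one_mul,
        ← ENNReal.ofReal_mul hr.le, ← ENNReal.ofReal_mul (by positivity)]
      congr 1
      ring
    · have hmem : polarCoord.symm (r, θ) ∉ g ⁻¹' s := by rw [mem_preimage, hgval]; exact hrs
      rw [indicator_of_notMem hmem, indicator_of_notMem hrs]
      simp
  rw [setLIntegral_congr_fun polarCoord.open_target.measurableSet hpoint]
  have hmeas : Measurable fun p : ℝ × ℝ =>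
      s.indicator (fun _ => (1:ℝ≥0∞)) p.1 * ENNReal.ofReal (p.1 * K * Real.exp (-a * p.1 ^ 2))
        * ENNReal.ofReal (Real.exp (b₀ * p.1 ^ 2 * Real.cos (2 * p.2))) := by
    apply Measurable.mul
    · apply Measurable.mul
      · exact (measurable_one.indicator hs).comp measurable_fst
      · apply ENNReal.measurable_ofReal.comp
        fun_prop
    · apply ENNReal.measurable_ofReal.comp
      fun_prop
  rw [polarCoord_target, Measure.volume_eq_prod, ← Measure.prod_restrict,
    lintegral_prod _ hmeas.aemeasurable]
  have hinner : ∀ r ∈ Ioi (0:ℝ),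
      (∫⁻ θ in Ioo (-π) π,
        s.indicator (fun _ => (1:ℝ≥0∞)) r * ENNReal.ofReal (r * K * Real.exp (-a * r ^ 2))
          * ENNReal.ofReal (Real.exp (b₀ * r ^ 2 * Real.cos (2 * θ))))
      = s.indicator φ r := by
    intro r hr
    rw [mem_Ioi] at hr
    rw [lintegral_const_mul' _ _ (by
      exact ENNReal.mul_ne_top (by
        by_cases h : r ∈ s <;> simp [indicator, h]) ENNReal.ofReal_ne_top),
      lintegral_Ioo_exp_cos]
    by_cases hrs : r ∈ s
    · rw [indicator_of_mem hrs, indicator_of_mem hrs, one_mul]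
      show ENNReal.ofReal (r * K * Real.exp (-a * r ^ 2))
            * ENNReal.ofReal (2 * π * besselI0 (b₀ * r ^ 2))
          = ENNReal.ofReal (if 0 < r then
              r / (σ₁ * σ₂) * Real.exp (-a * r ^ 2) * besselI0 (b₀ * r ^ 2) else 0)
      rw [if_pos hr, ← ENNReal.ofReal_mul (mul_nonneg (mul_nonneg hr.le hKpos.le)
        (Real.exp_pos _).le)]
      congr 1
      rw [hK_def]
      field_simp
    · rw [indicator_of_notMem hrs, indicator_of_notMem hrs]
      simp
  rw [setLIntegral_congr_fun measurableSet_Ioi hinner,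
    lintegral_indicator hs, Measure.restrict_restrict hs]
  have hφ0 : ∀ r : ℝ, φ r = (Ioi (0:ℝ)).indicator φ r := by
    intro r
    by_cases h : 0 < r
    · rw [indicator_of_mem (mem_Ioi.mpr h)]
    · rw [indicator_of_notMem (by simpa using h), hφ_def]
      simp [h]
  conv_rhs => rw [lintegral_congr hφ0, lintegral_indicator measurableSet_Ioi,
    Measure.restrict_restrict measurableSet_Ioi, inter_comm]

/-- Hoyt distribution: the norm `√(u₁² + u₂²)` of two independent centered
Gaussians with `σ₁ ≥ σ₂ > 0` has the Hoyt density. -/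
theorem hoyt_density
    {Ω : Type*} [MeasurableSpace Ω] (P : Measure Ω) [IsProbabilityMeasure P]
    (u₁ u₂ : Ω → ℝ) (σ₁ σ₂ : ℝ) (hσ₂ : 0 < σ₂) (hσ : σ₂ ≤ σ₁)
    (hindep : IndepFun u₁ u₂ P)
    (h₁ : Measure.map u₁ P = gaussianReal 0 (Real.toNNReal (σ₁ ^ 2)))
    (h₂ : Measure.map u₂ P = gaussianReal 0 (Real.toNNReal (σ₂ ^ 2))) :
    let q : ℝ := σ₂ / σ₁
    let Ω' : ℝ := σ₁ ^ 2 + σ₂ ^ 2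
    Measure.map (fun ω => Real.sqrt ((u₁ ω) ^ 2 + (u₂ ω) ^ 2)) P
      = volume.withDensity (fun r : ℝ =>
          ENNReal.ofReal (if 0 < r then
            ((1 + q ^ 2) / (q * Ω')) * r * Real.exp (-((1 + q ^ 2) ^ 2 / (4 * q ^ 2 * Ω')) * r ^ 2)
              * besselI0 (((1 - q ^ 4) / (4 * q ^ 2 * Ω')) * r ^ 2)
          else 0)) := by
  intro q Ω'
  have hσ₁ : 0 < σ₁ := lt_of_lt_of_le hσ₂ hσ
  have hσ₁' : σ₁ ≠ 0 := hσ₁.ne'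
  have hσ₂' : σ₂ ≠ 0 := hσ₂.ne'
  have hqe : q = σ₂ / σ₁ := rfl
  have hΩe : Ω' = σ₁ ^ 2 + σ₂ ^ 2 := rfl
  have hΩ0 : σ₁ ^ 2 + σ₂ ^ 2 ≠ 0 := by positivity
  have hu₁ : AEMeasurable u₁ P := by
    by_contra h
    rw [Measure.map_of_not_aemeasurable h] at h₁
    exact IsProbabilityMeasure.ne_zero (gaussianReal 0 (Real.toNNReal (σ₁ ^ 2))) h₁.symm
  have hu₂ : AEMeasurable u₂ P := by
    by_contra h
    rw [Measure.map_of_not_aemeasurable h] at h₂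
    exact IsProbabilityMeasure.ne_zero (gaussianReal 0 (Real.toNNReal (σ₂ ^ 2))) h₂.symm
  have hjoint : Measure.map (fun ω => (u₁ ω, u₂ ω)) P
      = (gaussianReal 0 (Real.toNNReal (σ₁ ^ 2))).prod (gaussianReal 0 (Real.toNNReal (σ₂ ^ 2))) := by
    rw [← h₁, ← h₂]
    exact (indepFun_iff_map_prod_eq_prod_map_map hu₁ hu₂).mp hindep
  have hgm : Measurable (fun p : ℝ × ℝ => Real.sqrt (p.1 ^ 2 + p.2 ^ 2)) :=
    (Real.continuous_sqrt.comp ((continuous_fst.pow 2).add (continuous_snd.pow 2))).measurable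
  have hcomp : (fun ω => Real.sqrt (u₁ ω ^ 2 + u₂ ω ^ 2))
      = (fun p : ℝ × ℝ => Real.sqrt (p.1 ^ 2 + p.2 ^ 2)) ∘ (fun ω => (u₁ ω, u₂ ω)) := rfl
  rw [hcomp, ← AEMeasurable.map_map_of_aemeasurable
      (hgm.aemeasurable) (hu₁.prodMk hu₂), hjoint, map_sqrt_gaussian σ₁ σ₂ hσ₁ hσ₂]
  congr 1
  funext r
  congr 1
  by_cases h : 0 < r
  · rw [if_pos h, if_pos h]
    have e1 : (1 + q ^ 2) / (q * Ω') * r = r / (σ₁ * σ₂) := by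
      rw [hqe, hΩe]; field_simp
    have e2 : -((1 + q ^ 2) ^ 2 / (4 * q ^ 2 * Ω')) * r ^ 2
        = -(1 / (4 * σ₁ ^ 2) + 1 / (4 * σ₂ ^ 2)) * r ^ 2 := by
      rw [hqe, hΩe]; field_simp; ring
    have e3 : (1 - q ^ 4) / (4 * q ^ 2 * Ω') * r ^ 2
        = (1 / (4 * σ₂ ^ 2) - 1 / (4 * σ₁ ^ 2)) * r ^ 2 := by
      rw [hqe, hΩe]; field_simp; ring
    rw [e1, e2, e3]
  · rw [if_neg h, if_neg h]
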